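/- arXiv:1302.6400 — 2 statements merged into one kernel-verified Lean document; each statement's English description precedes it below -/
import Mathlib

section
/- Let f be continuous and F(x) = ∫₀ˣ f. Let u : ℝ → ℝ be the inverse of y ↦ ∫₀ʸ e^{F}. If x(t) = u(y(t)) where x is twice differentiable and solves ẍ + f(x)ẋ² + g(x)ẋ + h(x) = 0, then y solves ÿ + g(u(y))ẏ + h(u(y))e^{F(u(y))} = 0. -/
theorem stmt_1 (f g h : ℝ → ℝ) (hf : Continuous f) (hg : Continuous g)
    (hh : Continuous h)
    (F : ℝ → ℝ) (hF : ∀ x, F x = ∫ t in (0:ℝ)..x, f t)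
    (u : ℝ → ℝ) (hu : ∀ x, u (∫ ξ in (0:ℝ)..x, Real.exp (F ξ)) = x)
    (x : ℝ → ℝ)
    (hx1 : ∀ t, DifferentiableAt ℝ x t)
    (hx2 : ∀ t, DifferentiableAt ℝ (deriv x) t)
    (hode : ∀ t, deriv (deriv x) t + f (x t) * (deriv x t) ^ 2
      + g (x t) * deriv x t + h (x t) = 0)
    (y : ℝ → ℝ) (hy : ∀ t, y t = ∫ ξ in (0:ℝ)..(x t), Real.exp (F ξ)) :
    ∀ t, deriv (deriv y) t + g (u (y t)) * deriv y t
      + h (u (y t)) * Real.exp (F (u (y t))) = 0 := by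
  have hFd : ∀ a, HasDerivAt F (f a) a := by
    intro a
    have hFe : F = fun s => ∫ t in (0:ℝ)..s, f t := funext hF
    rw [hFe]
    exact intervalIntegral.integral_hasDerivAt_right (hf.intervalIntegrable _ _)
      (hf.stronglyMeasurableAtFilter _ _) hf.continuousAt
  have hFc : Continuous F := by
    rw [continuous_iff_continuousAt]
    exact fun a => (hFd a).continuousAt
  have hec : Continuous fun ξ => Real.exp (F ξ) := Real.continuous_exp.comp hFc
  have hGd : ∀ a, HasDerivAt (fun s => ∫ ξ in (0:ℝ)..s, Real.exp (F ξ))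
      (Real.exp (F a)) a := fun a =>
    intervalIntegral.integral_hasDerivAt_right (hec.intervalIntegrable _ _)
      (hec.stronglyMeasurableAtFilter _ _) hec.continuousAt
  have hyd : ∀ t, HasDerivAt y (Real.exp (F (x t)) * deriv x t) t := by
    intro t
    have hye : y = fun t => (fun s => ∫ ξ in (0:ℝ)..s, Real.exp (F ξ)) (x t) := funext hy
    rw [hye]
    exact (hGd (x t)).comp t (hx1 t).hasDerivAt
  have hy' : deriv y = fun t => Real.exp (F (x t)) * deriv x t :=
    funext fun t => (hyd t).deriv
  have huy : ∀ t, u (y t) = x t := fun t => by rw [hy t]; exact hu (x t)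
  intro t
  have h2 : HasDerivAt (fun t => Real.exp (F (x t)) * deriv x t)
      (Real.exp (F (x t)) * (f (x t) * deriv x t) * deriv x t
        + Real.exp (F (x t)) * deriv (deriv x) t) t :=
    (((hFd (x t)).comp t (hx1 t).hasDerivAt).exp).mul (hx2 t).hasDerivAt
  have hdd : deriv (deriv y) t = Real.exp (F (x t)) * (f (x t) * deriv x t) * deriv x t
      + Real.exp (F (x t)) * deriv (deriv x) t := by
    rw [hy']; exact h2.deriv
  rw [hdd, hy', huy t]
  simp only []
  linear_combination Real.exp (F (x t)) * hode t
end

section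
/- Conversely, if a differentiable function A on (0,b) satisfies A(x) < x, H(A(x)) = H(x), and h(x) = (1/4)(x − A(x))(1 − A'(x)) with H(x) = ∫₀ˣ h > 0, then A(x) = x − 2√(2H(x)) on (0,b). -/
theorem stmt_11 (h : ℝ → ℝ) (hh : Continuous h)
    (H : ℝ → ℝ) (hH : ∀ x, H x = ∫ t in (0:ℝ)..x, h t)
    (b : ℝ) (hb : 0 < b) (hHpos : ∀ x ∈ Set.Ioo 0 b, 0 < H x)
    (A : ℝ → ℝ)
    (hAdiff : ∀ x ∈ Set.Ioo 0 b, DifferentiableAt ℝ A x)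
    (hAlt : ∀ x ∈ Set.Ioo 0 b, A x < x)
    (hAH : ∀ x ∈ Set.Ioo 0 b, H (A x) = H x)
    (hA0 : Filter.Tendsto A (nhdsWithin 0 (Set.Ioi 0)) (nhds 0))
    (heq : ∀ x ∈ Set.Ioo 0 b, h x = (1 / 4) * (x - A x) * (1 - deriv A x)) :
    ∀ x ∈ Set.Ioo 0 b, A x = x - 2 * Real.sqrt (2 * H x) := by
  have hHfun : H = fun u => ∫ t in (0:ℝ)..u, h t := funext hH
  have hHd : ∀ x : ℝ, HasDerivAt H (h x) x := by
    intro x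
    rw [hHfun]
    exact (hh.integral_hasStrictDerivAt 0 x).hasDerivAt
  set g : ℝ → ℝ := fun x => (x - A x)^2 / 8 - H x with hg
  have hgd : ∀ x ∈ Set.Ioo 0 b, HasDerivAt g 0 x := by
    intro x hx
    have hA := (hAdiff x hx).hasDerivAt
    have h1 : HasDerivAt (fun y => (y - A y)^2 / 8)
        ((2 * (x - A x) ^ 1 * (1 - deriv A x)) / 8) x :=
      (((hasDerivAt_id x).sub hA).pow 2).div_const 8
    have h2 := h1.sub (hHd x)
    refine h2.congr_deriv ?_
    rw [heq x hx]; ring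
  -- g is constant on Ioo 0 b
  have hconst : ∀ x ∈ Set.Ioo 0 b, ∀ y ∈ Set.Ioo 0 b, g x = g y := by
    intro x hx y hy
    have hlip : LipschitzOnWith 0 g (Set.Ioo 0 b) := by
      apply (convex_Ioo 0 b).lipschitzOnWith_of_nnnorm_hasDerivWithin_le
        (fun z hz => (hgd z hz).hasDerivWithinAt)
      intro z hz; simp
    have := hlip hx hy
    simpa using this
  -- g tends to 0 at 0+
  have hH0 : H 0 = 0 := by rw [hH]; simp
  have hHc : Continuous H := by
    rw [hHfun]; exact intervalIntegral.continuous_primitive (fun a b => hh.intervalIntegrable a b) 0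
  have hgt : Filter.Tendsto g (nhdsWithin 0 (Set.Ioi 0)) (nhds 0) := by
    have h1 : Filter.Tendsto (fun x : ℝ => (x - A x)^2 / 8 - H x)
        (nhdsWithin 0 (Set.Ioi 0)) (nhds ((0 - 0)^2 / 8 - H 0)) := by
      exact (((Filter.tendsto_id.mono_left nhdsWithin_le_nhds).sub hA0).pow 2).div_const 8 |>.sub
        ((hHc.tendsto 0).comp (Filter.tendsto_id.mono_left nhdsWithin_le_nhds))
    simpa [hH0] using h1
  intro x hx
  have hg0 : g x = 0 := by
    -- g is eventually equal to g x near 0+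
    have hmem : Set.Ioo (0:ℝ) b ∈ nhdsWithin 0 (Set.Ioi 0) := by
      have : Set.Ioo (0:ℝ) b = Set.Ioi 0 ∩ Set.Iio b := Set.Ioi_inter_Iio.symm
      rw [this]
      exact Filter.inter_mem self_mem_nhdsWithin
        (nhdsWithin_le_nhds (Iio_mem_nhds hb))
    have hev : ∀ᶠ y in nhdsWithin 0 (Set.Ioi 0), g y = g x :=
      Filter.eventually_of_mem hmem (fun y hy => hconst y hy x hx)
    have h2 : Filter.Tendsto g (nhdsWithin 0 (Set.Ioi 0)) (nhds (g x)) :=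
      Filter.Tendsto.congr' (Filter.EventuallyEq.symm hev) tendsto_const_nhds
    exact (tendsto_nhds_unique h2 hgt)
  have hsq : (x - A x)^2 = 8 * H x := by
    have : (x - A x)^2 / 8 - H x = 0 := hg0
    linarith
  have hpos : 0 < x - A x := sub_pos.mpr (hAlt x hx)
  have : x - A x = 2 * Real.sqrt (2 * H x) := by
    have h8 : (8 : ℝ) * H x = (2 : ℝ)^2 * (2 * H x) := by ring
    have hs : Real.sqrt ((x - A x)^2) = Real.sqrt ((2:ℝ)^2 * (2 * H x)) := by
      rw [hsq, h8]
    rw [Real.sqrt_sq hpos.le, Real.sqrt_mul (by positivity) (2 * H x),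
      Real.sqrt_sq (by norm_num : (0:ℝ) ≤ 2)] at hs
    exact hs
  linarith
end
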